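/- Let φ₁, φ₂ : Λ → Γ be ring homomorphisms. If the two restriction-of-scalars functors along φ₁ and φ₂, from the category of left Γ-modules to the category of left Λ-modules, are naturally isomorphic, then there exists an inner automorphism relating φ₁ and φ₂: there is a unit a ∈ Γ (an invertible element) such that a·φ₁(λ) = φ₂(λ)·a for all λ ∈ Λ. -/

import Mathlib

universe u

open CategoryTheory

/-- Let `φ₁, φ₂ : Λ → Γ` be ring homomorphisms.  If the restriction-of-scalars functors
along `φ₁` and `φ₂`, from left `Γ`-modules to left `Λ`-modules, are naturally isomorphic,
then there is a unit `a` of `Γ` with `a · φ₁(l) = φ₂(l) · a` for all `l`. -/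
theorem stmt_3 {Λ Γ : Type u} [Ring Λ] [Ring Γ] (φ₁ φ₂ : Λ →+* Γ)
    (h : Nonempty
      ((ModuleCat.restrictScalars.{u} φ₁ : ModuleCat.{u} Γ ⥤ ModuleCat.{u} Λ) ≅
        ModuleCat.restrictScalars.{u} φ₂)) :
    ∃ a : Γˣ, ∀ l : Λ, (a : Γ) * φ₁ l = φ₂ l * (a : Γ) := by
  obtain ⟨e⟩ := h
  set M : ModuleCat.{u} Γ := ModuleCat.of Γ Γ with hM
  -- the components of the natural isomorphism at `Γ`, as plain functions `Γ → Γ`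
  let η : Γ → Γ := fun x => e.hom.app M x
  let η' : Γ → Γ := fun x => e.inv.app M x
  -- naturality of the components at `Γ`
  have key : ∀ (f : M ⟶ M) (x : Γ), η (f x) = f (η x) := fun f x =>
    ConcreteCategory.congr_hom (e.hom.naturality f) x
  have key' : ∀ (f : M ⟶ M) (x : Γ), η' (f x) = f (η' x) := fun f x =>
    ConcreteCategory.congr_hom (e.inv.naturality f) x
  -- the components commute with right multiplication
  have hmul : ∀ x g : Γ, η (x * g) = η x * g := fun x g =>
    key (ModuleCat.ofHom (LinearMap.toSpanSingleton Γ Γ g)) x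
  have hmul' : ∀ x g : Γ, η' (x * g) = η' x * g := fun x g =>
    key' (ModuleCat.ofHom (LinearMap.toSpanSingleton Γ Γ g)) x
  -- the components are mutually inverse
  have hinv : ∀ x : Γ, η' (η x) = x := fun x =>
    ConcreteCategory.congr_hom (e.hom_inv_id_app M) x
  have hinv' : ∀ x : Γ, η (η' x) = x := fun x =>
    ConcreteCategory.congr_hom (e.inv_hom_id_app M) x
  -- Λ-semilinearity of the component
  have hlin : ∀ (l : Λ) (x : Γ), η (φ₁ l * x) = φ₂ l * η x := fun l x =>
    (e.hom.app M).hom.map_smul l x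
  -- build the unit
  have hba : η' 1 * η 1 = 1 := by
    rw [← hmul', one_mul]; exact hinv 1
  have hab : η 1 * η' 1 = 1 := by
    rw [← hmul, one_mul]; exact hinv' 1
  refine ⟨⟨η 1, η' 1, hab, hba⟩, fun l => ?_⟩
  calc η 1 * φ₁ l = η (1 * φ₁ l) := (hmul 1 (φ₁ l)).symm
    _ = η (φ₁ l * 1) := by rw [one_mul, mul_one]
    _ = φ₂ l * η 1 := hlin l 1
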